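/- (Strong maximum principle) Let ν be a symmetric Lévy measure on ℝⁿ with ν(ℝⁿ∖{0}) > 0 and Ω ⊆ ℝⁿ a nonempty bounded open set. If u ∈ C(ℝⁿ) is such that Lu(x) exists for every x ∈ Ω, Lu ≥ 0 in Ω, and u ≥ 0 on ℝⁿ∖Ω, then u ≥ 0 in Ω. -/

import Mathlib

open MeasureTheory Filter Set Topology
open scoped ENNReal Topology Pointwise Classical

noncomputable section

abbrev Eucl (n : ℕ) : Type := EuclideanSpace ℝ (Fin n)

/-- A symmetric Lévy measure on ℝⁿ: ν({0}) = 0, ν(−A) = ν(A) for Borel A, and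
∫ min(1,|y|²) dν < ∞. -/
def IsSymmLevy {n : ℕ} (ν : Measure (Eucl n)) : Prop :=
  ν {0} = 0 ∧ (∀ A : Set (Eucl n), MeasurableSet A → ν (-A) = ν A) ∧
    (∫⁻ y, ENNReal.ofReal (min 1 (‖y‖ ^ 2)) ∂ν) < ⊤

/-- The truncated nonlocal operator: ∫_{|y| ≥ ε} (u(x) − u(x+y)) dν(y). -/
def truncL {n : ℕ} (ν : Measure (Eucl n)) (u : Eucl n → ℝ) (x : Eucl n) (ε : ℝ) : ℝ :=
  ∫ y in {y : Eucl n | ε ≤ ‖y‖}, (u x - u (x + y)) ∂ν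

/-- `Lu(x)` is well defined with value `l`: the integrands are ν-integrable away from the
origin, and the principal value limit exists and equals `l`. -/
def HasLAt {n : ℕ} (ν : Measure (Eucl n)) (u : Eucl n → ℝ) (x : Eucl n) (l : ℝ) : Prop :=
  (∀ ε : ℝ, 0 < ε → IntegrableOn (fun y => u x - u (x + y)) {y : Eucl n | ε ≤ ‖y‖} ν) ∧
  Tendsto (truncL ν u x) (𝓝[>] (0:ℝ)) (𝓝 l)

/-- Squared norm of the generalized Sobolev space V_ν^D(ℝⁿ). -/
def sobSq {n : ℕ} (ν : Measure (Eucl n)) (D : Set (Eucl n)) (u : Eucl n → ℝ) : ℝ≥0∞ :=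
  (∫⁻ x in D, ENNReal.ofReal (u x ^ 2)) +
    (1/2) * ∫⁻ y in D, ∫⁻ z, ENNReal.ofReal ((u y - u (y + z)) ^ 2) ∂ν

/-- Membership in V_ν^D(ℝⁿ). -/
def MemV {n : ℕ} (ν : Measure (Eucl n)) (D : Set (Eucl n)) (u : Eucl n → ℝ) : Prop :=
  Measurable u ∧ sobSq ν D u < ⊤

/-- Membership in H_ν^D(ℝⁿ): members of V_ν^D vanishing a.e. outside D. -/
def MemH {n : ℕ} (ν : Measure (Eucl n)) (D : Set (Eucl n)) (u : Eucl n → ℝ) : Prop :=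
  MemV ν D u ∧ ∀ᵐ x ∂(volume : Measure (Eucl n)), x ∉ D → u x = 0

/-- The quadratic form ⟨u,u⟩_ν (with values in [0,∞]). -/
def formQ {n : ℕ} (ν : Measure (Eucl n)) (u : Eucl n → ℝ) : ℝ≥0∞ :=
  (1/2) * ∫⁻ y, ∫⁻ z, ENNReal.ofReal ((u y - u (y + z)) ^ 2) ∂ν

/-- The bilinear form ⟨u,v⟩_ν. -/
def formB {n : ℕ} (ν : Measure (Eucl n)) (u v : Eucl n → ℝ) : ℝ :=
  (1/2) * ∫ y, (∫ z, (u y - u (y + z)) * (v y - v (y + z)) ∂ν)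

/-- Weak solution of Lu = f in Ω, u = g on ℝⁿ∖Ω. -/
def IsWeakSol {n : ℕ} (ν : Measure (Eucl n)) (Ω : Set (Eucl n))
    (f g u : Eucl n → ℝ) : Prop :=
  MemV ν Ω u ∧ (∀ᵐ x ∂(volume : Measure (Eucl n)), x ∉ Ω → u x = g x) ∧
  ∀ φ : Eucl n → ℝ, MemH ν Ω φ → formB ν u φ = ∫ x in Ω, f x * φ x

end

theorem dirichlet_stmt15 {n : ℕ} (ν : Measure (Eucl n)) (hν : IsSymmLevy ν)
    (hν0 : 0 < ν ({0}ᶜ : Set (Eucl n)))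
    (Ω : Set (Eucl n)) (hΩo : IsOpen Ω) (hΩne : Ω.Nonempty)
    (hΩb : Bornology.IsBounded Ω)
    (u : Eucl n → ℝ) (hc : Continuous u)
    (Lu : Eucl n → ℝ) (hL : ∀ x ∈ Ω, HasLAt ν u x (Lu x))
    (hLpos : ∀ x ∈ Ω, 0 ≤ Lu x)
    (hout : ∀ x ∉ Ω, 0 ≤ u x) :
    ∀ x ∈ Ω, 0 ≤ u x := by
  by_contra hcon
  push_neg at hcon
  obtain ⟨x₁, hx₁Ω, hx₁⟩ := hcon
  -- the closure of Ω is compact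
  have hCc : IsCompact (closure Ω) := hΩb.isCompact_closure
  have hCne : (closure Ω).Nonempty := hΩne.closure
  obtain ⟨z, hzC, hz⟩ := hCc.exists_isMinOn hCne hc.continuousOn
  set m : ℝ := u z with hm
  have hmneg : m < 0 := lt_of_le_of_lt (hz (subset_closure hx₁Ω)) hx₁
  -- m is a global minimum of u
  have hglob : ∀ w, m ≤ u w := by
    intro w
    by_cases hw : w ∈ closure Ω
    · exact hz hw
    · exact le_trans hmneg.le (hout w fun h => hw (subset_closure h))
  -- the set of minimizers
  set K : Set (Eucl n) := {x | x ∈ closure Ω ∧ u x = m} with hK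
  have hKΩ : K ⊆ Ω := by
    intro x hx
    by_contra hxΩ
    exact absurd (hx.2 ▸ hout x hxΩ) (not_le.mpr hmneg)
  have hKc : IsCompact K := hCc.of_isClosed_subset
    (isClosed_closure.inter (isClosed_eq hc continuous_const)) (fun x hx => hx.1)
  have hKne : K.Nonempty := ⟨z, hzC, rfl⟩
  -- measurability of the annuli
  have hSmeas : ∀ ε : ℝ, MeasurableSet {y : Eucl n | ε ≤ ‖y‖} := fun ε =>
    (isClosed_le continuous_const continuous_norm).measurableSet
  -- key claim: for x₀ ∈ K, ν-a.e. y equals minimum after translation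
  have key : ∀ x₀ ∈ K, ν {y : Eucl n | y ≠ 0 ∧ u (x₀ + y) ≠ m} = 0 := by
    intro x₀ hx₀
    obtain ⟨hint, hlim⟩ := hL x₀ (hKΩ hx₀)
    have hux₀ : u x₀ = m := hx₀.2
    have hpos := hLpos x₀ (hKΩ hx₀)
    have negint : ∀ s : Set (Eucl n),
        ∫ y in s, (u (x₀ + y) - u x₀) ∂ν = - ∫ y in s, (u x₀ - u (x₀ + y)) ∂ν := by
      intro s
      rw [← integral_neg]
      congr 1
      funext y
      ring
    have hptnn : ∀ y : Eucl n, 0 ≤ u (x₀ + y) - u x₀ := by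
      intro y
      have := hglob (x₀ + y)
      rw [hux₀]
      linarith
    -- each truncated integral is nonpositive
    have hA : ∀ ε : ℝ, truncL ν u x₀ ε ≤ 0 := by
      intro ε
      refine integral_nonpos fun y => ?_
      have := hptnn y
      show u x₀ - u (x₀ + y) ≤ 0
      linarith
    -- monotonicity in ε
    have hB : ∀ ε ε' : ℝ, 0 < ε → ε ≤ ε' → truncL ν u x₀ ε ≤ truncL ν u x₀ ε' := by
      intro ε ε' hε hεε'
      have hsub : {y : Eucl n | ε' ≤ ‖y‖} ⊆ {y : Eucl n | ε ≤ ‖y‖} :=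
        fun y hy => le_trans hεε' hy
      have hint' : IntegrableOn (fun y => u (x₀ + y) - u x₀) {y : Eucl n | ε ≤ ‖y‖} ν := by
        exact ((hint ε hε).neg).congr (Filter.Eventually.of_forall fun y => by
          show -(u x₀ - u (x₀ + y)) = u (x₀ + y) - u x₀; ring)
      have hmono := setIntegral_mono_set hint'
        (Filter.Eventually.of_forall (fun y => hptnn y))
        hsub.eventuallyLE
      rw [negint, negint] at hmono
      unfold truncL
      linarith
    -- each truncated integral vanishes
    have hD : ∀ ε : ℝ, 0 < ε → truncL ν u x₀ ε = 0 := by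
      intro ε hε
      refine le_antisymm (hA ε) ?_
      refine le_trans hpos (le_of_tendsto hlim ?_)
      filter_upwards [Ioc_mem_nhdsGT_of_mem (Set.left_mem_Ico.mpr hε)] with t ht
      exact hB t ε ht.1 ht.2
    -- hence the integrand vanishes a.e. on each annulus
    have hE : ∀ ε : ℝ, 0 < ε →
        ν {y : Eucl n | ε ≤ ‖y‖ ∧ u (x₀ + y) ≠ m} = 0 := by
      intro ε hε
      have hintg : Integrable (fun y => u (x₀ + y) - u x₀)
          (ν.restrict {y : Eucl n | ε ≤ ‖y‖}) := by
        exact ((hint ε hε).neg).congr (Filter.Eventually.of_forall fun y => by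
          show -(u x₀ - u (x₀ + y)) = u (x₀ + y) - u x₀; ring)
      have hzero : ∫ y in {y : Eucl n | ε ≤ ‖y‖}, (u (x₀ + y) - u x₀) ∂ν = 0 := by
        rw [negint]
        have := hD ε hε
        unfold truncL at this
        rw [this, neg_zero]
      have hae := (integral_eq_zero_iff_of_nonneg hptnn hintg).mp hzero
      rw [Filter.EventuallyEq, ae_restrict_iff' (hSmeas ε)] at hae
      rw [Filter.Eventually, mem_ae_iff] at hae
      refine measure_mono_null ?_ hae
      intro y hy hmem
      simp only [Set.mem_compl_iff, Set.mem_setOf_eq] at hmem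
      have := hmem hy.1
      simp only [Pi.zero_apply] at this
      exact hy.2 (by rw [← hux₀]; linarith)
    -- cover {0}ᶜ by countably many annuli
    have hcover : {y : Eucl n | y ≠ 0 ∧ u (x₀ + y) ≠ m} ⊆
        ⋃ k : ℕ, {y : Eucl n | (1 : ℝ)/(k+1) ≤ ‖y‖ ∧ u (x₀ + y) ≠ m} := by
      intro y hy
      have hny : 0 < ‖y‖ := norm_pos_iff.mpr hy.1
      obtain ⟨k, hk⟩ := exists_nat_gt (1 / ‖y‖)
      refine Set.mem_iUnion.mpr ⟨k, ?_, hy.2⟩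
      rw [div_le_iff₀ (by positivity)]
      rw [div_lt_iff₀ hny] at hk
      nlinarith
    refine measure_mono_null hcover (measure_iUnion_null fun k => hE _ (by positivity))
  -- extremal translation argument: each half-space has measure zero
  have hhalf : ∀ i : Fin n, ν {y : Eucl n | 0 < y i} = 0 := by
    intro i
    obtain ⟨xi, hxiK, hxi⟩ := hKc.exists_isMaxOn hKne
      (show Continuous (fun x : Eucl n => x i) by fun_prop).continuousOn
    refine measure_mono_null ?_ (key xi hxiK)
    intro y hy
    have hy' : (0:ℝ) < y i := hy
    constructor
    · intro h0
      rw [h0] at hy'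
      simp at hy'
    · intro hum
      have hΩmem : xi + y ∈ Ω := by
        by_contra hni
        exact absurd (hum ▸ hout _ hni) (not_le.mpr hmneg)
      have hmem : xi + y ∈ K := ⟨subset_closure hΩmem, hum⟩
      have h1 : (xi + y) i ≤ xi i := hxi hmem
      have h2 : (xi + y) i = xi i + y i := rfl
      linarith
  have hhalf' : ∀ i : Fin n, ν {y : Eucl n | y i < 0} = 0 := by
    intro i
    have hms : MeasurableSet {y : Eucl n | 0 < y i} :=
      (isOpen_lt continuous_const (show Continuous (fun x : Eucl n => x i) by fun_prop)).measurableSet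
    have hsymm := hν.2.1 {y : Eucl n | 0 < y i} hms
    rw [show -{y : Eucl n | 0 < y i} = {y : Eucl n | y i < 0} from ?_] at hsymm
    · rw [hsymm]; exact hhalf i
    · ext y
      simp only [Set.mem_neg, Set.mem_setOf_eq]
      constructor
      · intro h
        have : (0:ℝ) < (-y) i := h
        have h2 : (-y) i = -(y i) := rfl
        linarith
      · intro h
        show (0:ℝ) < (-y) i
        have h2 : (-y) i = -(y i) := rfl
        linarith
  -- conclude ν {0}ᶜ = 0, contradiction
  have hfinal : ν ({0}ᶜ : Set (Eucl n)) = 0 := by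
    refine measure_mono_null ?_
      (measure_iUnion_null (s := fun i : Fin n => {y : Eucl n | y i ≠ 0}) fun i => ?_)
    · intro y hy
      have hy0 : y ≠ 0 := hy
      obtain ⟨i, hi⟩ := Function.ne_iff.mp (fun h => hy0 (by ext j; exact congrFun h j))
      exact Set.mem_iUnion.mpr ⟨i, hi⟩
    · have hsub : {y : Eucl n | y i ≠ 0} ⊆ {y : Eucl n | 0 < y i} ∪ {y : Eucl n | y i < 0} := by
        intro y hy
        rcases lt_or_gt_of_ne (hy : y i ≠ 0) with h | h
        · exact Or.inr h
        · exact Or.inl h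
      exact measure_mono_null hsub
        (measure_union_null (hhalf i) (hhalf' i))
  exact absurd (hfinal ▸ hν0) (lt_irrefl 0)
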